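/- Let δ ∈ (0,1), and let d, k be positive integers with k ≤ d. There exists a set of k-sparse vectors in {0, ±1/√k}^d, each with exactly k nonzero coordinates, of cardinality at least (d/k)^{k(1−δ)} · (δ/e)^{δk}, such that any two distinct vectors in the set have Euclidean distance greater than √δ. -/

import Mathlib

open Finset

section SparsePackingAux

variable {d k : ℕ}

/-- `(d/k)^k ≤ C(d,k)` in the reals. -/
private lemma sp_pow_div_le_choose : ∀ k d : ℕ, k ≤ d → ((d : ℝ) / k) ^ k ≤ d.choose k := by
  intro k
  induction k with
  | zero => intro d _; simp
  | succ k ih =>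
    intro d hkd
    obtain ⟨e, rfl⟩ : ∃ e, d = e + 1 := ⟨d - 1, by omega⟩
    have hke : k ≤ e := by omega
    have hid : ((e+1).choose (k+1) : ℝ) = ((e:ℝ)+1) / ((k:ℝ)+1) * (e.choose k) := by
      have h := Nat.add_one_mul_choose_eq e k
      have h' : ((e:ℝ)+1) * e.choose k = ((e+1).choose (k+1) : ℝ) * ((k:ℝ)+1) := by
        exact_mod_cast congrArg (Nat.cast : ℕ → ℝ) h
      field_simp
      linarith [h']
    rw [hid]
    push_cast
    have hb : (0:ℝ) ≤ ((e:ℝ)+1) / ((k:ℝ)+1) := by positivity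
    have hpow : (((e:ℝ)+1) / ((k:ℝ)+1)) ^ k ≤ ((e:ℝ)/(k:ℝ)) ^ k := by
      rcases Nat.eq_zero_or_pos k with h0 | hpos
      · simp [h0]
      · apply pow_le_pow_left₀ hb
        rw [div_le_div_iff₀ (by positivity) (by exact_mod_cast hpos)]
        have h1 : (k:ℝ) ≤ e := by exact_mod_cast hke
        have h2 : (0:ℝ) < k := by exact_mod_cast hpos
        nlinarith
    calc (((e:ℝ)+1) / ((k:ℝ)+1)) ^ (k+1)
        = (((e:ℝ)+1) / ((k:ℝ)+1)) * (((e:ℝ)+1) / ((k:ℝ)+1)) ^ k := by ring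
      _ ≤ (((e:ℝ)+1) / ((k:ℝ)+1)) * (((e:ℝ)/(k:ℝ)) ^ k) :=
          mul_le_mul_of_nonneg_left hpow hb
      _ ≤ (((e:ℝ)+1) / ((k:ℝ)+1)) * (e.choose k : ℝ) :=
          mul_le_mul_of_nonneg_left (ih e hke) hb

private lemma sp_key_ineq (d k t : ℕ) (hk : 0 < k) (hkd : k ≤ d)
    (δ : ℝ) (hδ0 : 0 < δ) (hδ1 : δ < 1) (ht : (t:ℝ) ≤ δ * k) :
    ((d : ℝ) / k) ^ ((k : ℝ) * (1 - δ)) * (δ / Real.exp 1) ^ (δ * k)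
      * (∑ j ∈ Finset.range (t+1), ((2*d).choose j : ℝ))
    ≤ (d.choose k : ℝ) * 2 ^ k := by
  have hd : 0 < d := lt_of_lt_of_le hk hkd
  have hdR : (0:ℝ) < d := by exact_mod_cast hd
  have hkR : (0:ℝ) < k := by exact_mod_cast hk
  have hkdR : (k:ℝ) ≤ d := by exact_mod_cast hkd
  set x : ℝ := δ * k / (2 * d) with hxdef
  have hx0 : 0 < x := by positivity
  have hx1 : x ≤ 1 := by
    rw [div_le_one (by positivity)]
    nlinarith
  have htd : t < k := by
    have : (t:ℝ) < k := lt_of_le_of_lt ht (by nlinarith)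
    exact_mod_cast this
  have hA : x ^ t * (∑ j ∈ Finset.range (t+1), ((2*d).choose j : ℝ)) ≤ Real.exp (δ * k) := by
    have h1 : x ^ t * (∑ j ∈ Finset.range (t+1), ((2*d).choose j : ℝ))
        ≤ ∑ j ∈ Finset.range (t+1), x ^ j * ((2*d).choose j : ℝ) := by
      rw [Finset.mul_sum]
      apply Finset.sum_le_sum
      intro j hj
      have hjt : j ≤ t := by simpa [Nat.lt_succ_iff] using hj
      exact mul_le_mul_of_nonneg_right (pow_le_pow_of_le_one hx0.le hx1 hjt) (by positivity)
    have h2 : ∑ j ∈ Finset.range (t+1), x ^ j * ((2*d).choose j : ℝ)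
        ≤ (x + 1) ^ (2*d) := by
      rw [add_pow]
      simp only [one_pow, mul_one]
      apply Finset.sum_le_sum_of_subset_of_nonneg
      · apply Finset.range_subset_range.2; omega
      · intro j _ _; positivity
    have h3 : (x + 1) ^ (2*d) ≤ Real.exp (δ * k) := by
      calc (x + 1) ^ (2*d) ≤ (Real.exp x) ^ (2*d) := by
            apply pow_le_pow_left₀ (by positivity) (Real.add_one_le_exp x)
        _ = Real.exp (x * (2*d)) := by rw [← Real.exp_nat_mul]; push_cast; ring_nf
        _ = Real.exp (δ * k) := by
            congr 1
            rw [hxdef]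
            field_simp
    linarith
  have hB : (∑ j ∈ Finset.range (t+1), ((2*d).choose j : ℝ))
      ≤ Real.exp (δ * k) * (1/x) ^ (δ * k) := by
    have hxinv : (1:ℝ) ≤ 1/x := by
      rw [le_div_iff₀ hx0]; linarith
    have hxt : (0:ℝ) < x ^ t := pow_pos hx0 t
    have h4 : (∑ j ∈ Finset.range (t+1), ((2*d).choose j : ℝ))
        ≤ Real.exp (δ * k) * (1/x) ^ t := by
      rw [one_div, inv_pow, ← div_eq_mul_inv, le_div_iff₀ hxt, mul_comm]
      exact hA
    calc (∑ j ∈ Finset.range (t+1), ((2*d).choose j : ℝ))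
        ≤ Real.exp (δ * k) * (1/x) ^ t := h4
      _ = Real.exp (δ * k) * (1/x) ^ (t:ℝ) := by rw [Real.rpow_natCast]
      _ ≤ Real.exp (δ * k) * (1/x) ^ (δ * k) := by
          apply mul_le_mul_of_nonneg_left _ (Real.exp_pos _).le
          exact Real.rpow_le_rpow_of_exponent_le hxinv ht
  have hdk1 : (1:ℝ) ≤ (d:ℝ)/k := by
    rw [le_div_iff₀ hkR]; linarith
  have hδe : δ / Real.exp 1 > 0 := by positivity
  have hval : δ / Real.exp 1 * (Real.exp 1 * (1/x)) = (d:ℝ)/k * 2 := by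
    rw [hxdef]
    have h1 : Real.exp 1 ≠ 0 := (Real.exp_pos 1).ne'
    field_simp
  have key : ((d : ℝ) / k) ^ ((k : ℝ) * (1 - δ)) * (δ / Real.exp 1) ^ (δ * k)
      * (Real.exp (δ * k) * (1/x) ^ (δ * k))
      = ((d:ℝ)/k) ^ (k:ℝ) * 2 ^ (δ * k) := by
    rw [← Real.exp_one_rpow (δ * k), mul_assoc,
        ← Real.mul_rpow (Real.exp_pos 1).le (by positivity),
        ← Real.mul_rpow hδe.le (by positivity), hval,
        Real.mul_rpow (by positivity) (by norm_num), ← mul_assoc,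
        ← Real.rpow_add (by positivity)]
    congr 2
    ring
  have hchoose : ((d:ℝ)/k) ^ (k:ℝ) ≤ (d.choose k : ℝ) := by
    rw [Real.rpow_natCast]
    exact sp_pow_div_le_choose k d hkd
  have h6 : (2:ℝ) ^ (δ * k) ≤ (2:ℝ) ^ k := by
    rw [← Real.rpow_natCast 2 k]
    apply Real.rpow_le_rpow_of_exponent_le (by norm_num)
    nlinarith
  calc ((d : ℝ) / k) ^ ((k : ℝ) * (1 - δ)) * (δ / Real.exp 1) ^ (δ * k)
      * (∑ j ∈ Finset.range (t+1), ((2*d).choose j : ℝ))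
      ≤ ((d : ℝ) / k) ^ ((k : ℝ) * (1 - δ)) * (δ / Real.exp 1) ^ (δ * k)
      * (Real.exp (δ * k) * (1/x) ^ (δ * k)) :=
        mul_le_mul_of_nonneg_left hB (by positivity)
    _ = ((d:ℝ)/k) ^ (k:ℝ) * 2 ^ (δ * k) := key
    _ ≤ (d.choose k : ℝ) * 2 ^ k :=
        mul_le_mul hchoose h6 (by positivity) (Nat.cast_nonneg _)

/-- The set of sign patterns with exactly `k` nonzero entries. -/
private def SPT (d k : ℕ) : Finset (Fin d → Fin 3) :=
  Finset.univ.filter fun σ => (Finset.univ.filter fun i => σ i ≠ 0).card = k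

private lemma sp_card_SPT_ge (hkd : k ≤ d) : d.choose k * 2 ^ k ≤ (SPT d k).card := by
  classical
  set D : Finset (Finset (Fin d) × (Fin k → Bool)) :=
    (Finset.univ.powersetCard k) ×ˢ Finset.univ with hD
  have hcardD : D.card = d.choose k * 2 ^ k := by
    rw [hD, Finset.card_product, Finset.card_powersetCard, Finset.card_univ,
      Fintype.card_fin, Finset.card_univ]
    congr 1
    simp [Fintype.card_fun]
  rw [← hcardD]
  set F : Finset (Fin d) × (Fin k → Bool) → (Fin d → Fin 3) :=
    fun p i => if h : p.1.card = k ∧ i ∈ p.1 then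
      (if p.2 ((p.1.orderIsoOfFin h.1).symm ⟨i, h.2⟩) then 1 else 2) else 0 with hF
  have hsupp : ∀ p : Finset (Fin d) × (Fin k → Bool), p.1.card = k →
      ∀ i, F p i ≠ 0 ↔ i ∈ p.1 := by
    intro p hp i
    simp only [hF]
    by_cases hi : i ∈ p.1
    · rw [dif_pos ⟨hp, hi⟩]
      by_cases hb : p.2 ((p.1.orderIsoOfFin hp).symm ⟨i, hi⟩) <;> simp [hb, hi]
    · rw [dif_neg (by tauto)]
      simp [hi]
  apply Finset.card_le_card_of_injOn F
  · intro p hp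
    rw [Finset.mem_coe, hD, Finset.mem_product, Finset.mem_powersetCard_univ] at hp
    rw [Finset.mem_coe, SPT, Finset.mem_filter]
    refine ⟨Finset.mem_univ _, ?_⟩
    rw [← hp.1]
    congr 1
    ext i
    simp [hsupp p hp.1 i]
  · rintro ⟨A, g⟩ hp ⟨A', g'⟩ hq hpq
    rw [Finset.mem_coe, hD, Finset.mem_product, Finset.mem_powersetCard_univ] at hp hq
    have hA : A.card = k := hp.1
    have hA' : A'.card = k := hq.1
    have hAB : A = A' := by
      ext i
      rw [← hsupp (A, g) hA i, ← hsupp (A', g') hA' i, hpq]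
    subst hAB
    have hg : g = g' := by
      funext j
      set i : Fin d := ((A.orderIsoOfFin hA) j).1 with hi
      have him : (i : Fin d) ∈ A := ((A.orderIsoOfFin hA) j).2
      have hsymm : (A.orderIsoOfFin hA).symm ⟨i, him⟩ = j := by
        have : (⟨i, him⟩ : { x // x ∈ A }) = (A.orderIsoOfFin hA) j := by
          apply Subtype.ext
          exact hi
        rw [this, OrderIso.symm_apply_apply]
      have h1 : F (A, g) i = if g j then 1 else 2 := by
        simp only [hF]
        rw [dif_pos ⟨hA, him⟩, hsymm]
      have h2 : F (A, g') i = if g' j then 1 else 2 := by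
        simp only [hF]
        rw [dif_pos ⟨hA, him⟩, hsymm]
      have := h1 ▸ h2 ▸ congrFun hpq i
      by_cases hb : g j <;> by_cases hb' : g' j <;> simp_all
    rw [hg]

/-- Hamming distance between sign patterns. -/
private def SPΔ (σ τ : Fin d → Fin 3) : ℕ := (Finset.univ.filter fun i => σ i ≠ τ i).card

private lemma sp_SPΔ_comm (σ τ : Fin d → Fin 3) : SPΔ σ τ = SPΔ τ σ := by
  unfold SPΔ; congr 1; ext i; simp [ne_comm]

private lemma sp_SPΔ_self (σ : Fin d → Fin 3) : SPΔ σ σ = 0 := by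
  simp [SPΔ]

private lemma sp_ball_card_le (S : Finset (Fin d → Fin 3)) (ρ : Fin d → Fin 3) (t : ℕ) :
    (S.filter fun σ => SPΔ σ ρ ≤ t).card ≤ ∑ j ∈ Finset.range (t+1), (2*d).choose j := by
  classical
  set U : Finset (Fin d × Fin 3) := Finset.univ.filter fun p => p.2 ≠ ρ p.1 with hU
  have hUcard : U.card = 2 * d := by
    have h1 : (Finset.univ.filter fun p : Fin d × Fin 3 => p.2 = ρ p.1).card = d := by
      have heq : (Finset.univ.filter fun p : Fin d × Fin 3 => p.2 = ρ p.1)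
          = Finset.univ.image (fun i : Fin d => (i, ρ i)) := by
        ext ⟨i, a⟩
        simp only [Finset.mem_filter, Finset.mem_univ, true_and, Finset.mem_image,
          Prod.mk.injEq]
        constructor
        · rintro rfl; exact ⟨i, rfl, rfl⟩
        · rintro ⟨j, rfl, rfl⟩; rfl
      rw [heq, Finset.card_image_of_injective _ (fun a b hab => (Prod.ext_iff.1 hab).1),
        Finset.card_univ, Fintype.card_fin]
    have h2 := Finset.card_filter_add_card_filter_not
      (s := (Finset.univ : Finset (Fin d × Fin 3))) (p := fun p => p.2 = ρ p.1)
    rw [Finset.card_univ, Fintype.card_prod, Fintype.card_fin, Fintype.card_fin] at h2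
    have h3 : U.card = (Finset.univ.filter fun p : Fin d × Fin 3 => ¬ p.2 = ρ p.1).card := rfl
    omega
  set Tgt : Finset (Finset (Fin d × Fin 3)) :=
    (Finset.range (t+1)).biUnion (fun j => U.powersetCard j) with hTgt
  have hTgtcard : Tgt.card = ∑ j ∈ Finset.range (t+1), (2*d).choose j := by
    rw [hTgt, Finset.card_biUnion]
    · apply Finset.sum_congr rfl
      intro j _
      rw [Finset.card_powersetCard, hUcard]
    · intro a _ b _ hab
      apply Finset.disjoint_left.2
      intro E hEa hEb
      rw [Finset.mem_powersetCard] at hEa hEb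
      exact hab (hEa.2 ▸ hEb.2.symm ▸ rfl)
  rw [← hTgtcard]
  set G : (Fin d → Fin 3) → Finset (Fin d × Fin 3) :=
    fun σ => (Finset.univ.filter fun i => σ i ≠ ρ i).image (fun i => (i, σ i)) with hG
  have hGcard : ∀ σ, (G σ).card = SPΔ σ ρ := by
    intro σ
    rw [hG]
    apply Finset.card_image_of_injOn
    intro a _ b _ hab
    exact (Prod.ext_iff.1 hab).1
  apply Finset.card_le_card_of_injOn G
  · intro σ hσ
    rw [Finset.mem_coe, Finset.mem_filter] at hσ
    rw [Finset.mem_coe, hTgt, Finset.mem_biUnion]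
    refine ⟨(G σ).card, ?_, ?_⟩
    · rw [Finset.mem_range, hGcard σ]
      omega
    · rw [Finset.mem_powersetCard]
      refine ⟨?_, rfl⟩
      intro p hp
      rw [hG, Finset.mem_image] at hp
      obtain ⟨i, hi, rfl⟩ := hp
      rw [Finset.mem_filter] at hi
      rw [hU, Finset.mem_filter]
      exact ⟨Finset.mem_univ _, hi.2⟩
  · intro σ hσ τ hτ hστ
    funext i
    have key : ∀ a, (i, a) ∈ G σ ↔ (i, a) ∈ G τ := fun a => by rw [hστ]
    by_cases h1 : σ i = ρ i <;> by_cases h2 : τ i = ρ i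
    · rw [h1, h2]
    · exfalso
      have hm : (i, τ i) ∈ G τ := by
        rw [hG, Finset.mem_image]
        exact ⟨i, Finset.mem_filter.2 ⟨Finset.mem_univ _, h2⟩, rfl⟩
      rw [← (key (τ i)), hG, Finset.mem_image] at hm
      obtain ⟨j, hj, hji⟩ := hm
      rw [Prod.mk.injEq] at hji
      obtain ⟨rfl, hv⟩ := hji
      exact (Finset.mem_filter.1 hj).2 h1
    · exfalso
      have hm : (i, σ i) ∈ G σ := by
        rw [hG, Finset.mem_image]
        exact ⟨i, Finset.mem_filter.2 ⟨Finset.mem_univ _, h1⟩, rfl⟩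
      rw [key (σ i), hG, Finset.mem_image] at hm
      obtain ⟨j, hj, hji⟩ := hm
      rw [Prod.mk.injEq] at hji
      obtain ⟨rfl, hv⟩ := hji
      exact (Finset.mem_filter.1 hj).2 h2
    · have hm : (i, σ i) ∈ G σ := by
        rw [hG, Finset.mem_image]
        exact ⟨i, Finset.mem_filter.2 ⟨Finset.mem_univ _, h1⟩, rfl⟩
      rw [key (σ i), hG, Finset.mem_image] at hm
      obtain ⟨j, hj, hji⟩ := hm
      rw [Prod.mk.injEq] at hji
      obtain ⟨rfl, hv⟩ := hji
      exact hv.symm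

private lemma sp_exists_packing (S : Finset (Fin d → Fin 3)) (t : ℕ) :
    ∃ M ⊆ S, (∀ σ ∈ M, ∀ τ ∈ M, σ ≠ τ → t < SPΔ σ τ) ∧
      S.card ≤ M.card * ∑ j ∈ Finset.range (t+1), (2*d).choose j := by
  classical
  set PP : Finset (Finset (Fin d → Fin 3)) :=
    S.powerset.filter (fun M => ∀ σ ∈ M, ∀ τ ∈ M, σ ≠ τ → t < SPΔ σ τ) with hPP
  have hne : PP.Nonempty := ⟨∅, by simp [hPP]⟩
  obtain ⟨M, hMPP, hMmax⟩ := Finset.exists_max_image PP Finset.card hne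
  rw [hPP, Finset.mem_filter, Finset.mem_powerset] at hMPP
  obtain ⟨hMS, hMpack⟩ := hMPP
  refine ⟨M, hMS, hMpack, ?_⟩
  have hcov : ∀ σ ∈ S, ∃ ρ ∈ M, SPΔ σ ρ ≤ t := by
    intro σ hσ
    by_contra hc
    push_neg at hc
    have hσM : σ ∉ M := by
      intro hm
      exact absurd (sp_SPΔ_self σ ▸ hc σ hm) (by omega)
    have hins : insert σ M ∈ PP := by
      rw [hPP, Finset.mem_filter, Finset.mem_powerset]
      refine ⟨Finset.insert_subset hσ hMS, ?_⟩
      intro a ha b hb hab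
      rw [Finset.mem_insert] at ha hb
      rcases ha with rfl | ha <;> rcases hb with rfl | hb
      · exact absurd rfl hab
      · exact hc b hb
      · rw [sp_SPΔ_comm]; exact hc a ha
      · exact hMpack a ha b hb hab
    have := hMmax _ hins
    rw [Finset.card_insert_of_notMem hσM] at this
    omega
  have hsub : S ⊆ M.biUnion (fun ρ => S.filter fun σ => SPΔ σ ρ ≤ t) := by
    intro σ hσ
    obtain ⟨ρ, hρ, hd⟩ := hcov σ hσ
    exact Finset.mem_biUnion.2 ⟨ρ, hρ, Finset.mem_filter.2 ⟨hσ, hd⟩⟩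
  calc S.card ≤ (M.biUnion (fun ρ => S.filter fun σ => SPΔ σ ρ ≤ t)).card :=
        Finset.card_le_card hsub
    _ ≤ ∑ ρ ∈ M, (S.filter fun σ => SPΔ σ ρ ≤ t).card := Finset.card_biUnion_le
    _ ≤ ∑ _ρ ∈ M, ∑ j ∈ Finset.range (t+1), (2*d).choose j :=
        Finset.sum_le_sum (fun ρ _ => sp_ball_card_le S ρ t)
    _ = M.card * ∑ j ∈ Finset.range (t+1), (2*d).choose j := by
        rw [Finset.sum_const, smul_eq_mul]

private lemma sp_val_cases (s : ℝ) : ∀ a : Fin 3, ![0, s, -s] a = 0 ∨ ![0, s, -s] a = s ∨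
    ![0, s, -s] a = -s := by
  intro a; fin_cases a <;> simp

private lemma sp_val_ne (s : ℝ) (hs0 : 0 < s) :
    ∀ a : Fin 3, ![0, s, -s] a ≠ 0 ↔ a ≠ 0 := by
  intro a
  fin_cases a <;>
    simp [Fin.mk_zero, Fin.mk_one, Matrix.cons_val_zero, Matrix.cons_val_one,
      Matrix.head_cons, show (⟨2, by norm_num⟩ : Fin 3) = 2 from rfl,
      Matrix.cons_val_two, Matrix.tail_cons, hs0.ne', Fin.ext_iff]

private lemma sp_val_inj (s : ℝ) (hs0 : 0 < s) :
    ∀ a b : Fin 3, ![0, s, -s] a = ![0, s, -s] b → a = b := by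
  intro a b hab
  fin_cases a <;> fin_cases b <;>
    first
      | rfl
      | (exfalso
         simp only [Fin.mk_zero, Fin.mk_one, Matrix.cons_val_zero, Matrix.cons_val_one,
           Matrix.head_cons, show (⟨2, by norm_num⟩ : Fin 3) = 2 from rfl,
           Matrix.cons_val_two, Matrix.tail_cons] at hab
         linarith)

private lemma sp_val_diff (s c : ℝ) (hssq : s ^ 2 = c) (hs0 : 0 < s) :
    ∀ a b : Fin 3, a ≠ b → c ≤ (![0, s, -s] a - ![0, s, -s] b) ^ 2 := by
  intro a b hab
  have hc0 : 0 < c := hssq ▸ (by positivity)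
  fin_cases a <;> fin_cases b <;> simp_all <;> nlinarith [hssq, hs0, hc0]

end SparsePackingAux

/-- Packing of `k`-sparse sign vectors: there is a set of vectors in `{0, ±1/√k}^d`, each with
exactly `k` nonzero coordinates, of cardinality at least `(d/k)^{k(1−δ)} (δ/e)^{δk}`, whose
pairwise Euclidean distances all exceed `√δ`. -/
theorem sparse_vector_packing (d k : ℕ) (hk : 0 < k) (hkd : k ≤ d)
    (δ : ℝ) (hδ0 : 0 < δ) (hδ1 : δ < 1) :
    ∃ V : Finset (EuclideanSpace ℝ (Fin d)),
      (∀ v ∈ V,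
        (∀ i, v i = 0 ∨ v i = 1 / Real.sqrt k ∨ v i = -(1 / Real.sqrt k)) ∧
        (Finset.univ.filter fun i => v i ≠ 0).card = k) ∧
      ((d : ℝ) / k) ^ ((k : ℝ) * (1 - δ)) * (δ / Real.exp 1) ^ (δ * k) ≤ V.card ∧
      (∀ v ∈ V, ∀ w ∈ V, v ≠ w → Real.sqrt δ < dist v w) := by
  classical
  have hkR : (0:ℝ) < k := by exact_mod_cast hk
  have hsqk : (0:ℝ) < Real.sqrt k := Real.sqrt_pos.2 hkR
  set s : ℝ := 1 / Real.sqrt k with hs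
  have hs0 : 0 < s := by positivity
  have hssq : s^2 = 1/(k:ℝ) := by
    rw [hs, div_pow, one_pow, Real.sq_sqrt hkR.le]
  set val : Fin 3 → ℝ := ![0, s, -s] with hval
  have hvalcases : ∀ a : Fin 3, val a = 0 ∨ val a = s ∨ val a = -s := by
    rw [hval]; exact sp_val_cases s
  have hvalne : ∀ a : Fin 3, val a ≠ 0 ↔ a ≠ 0 := by
    rw [hval]; exact sp_val_ne s hs0
  have hvalinj : ∀ a b : Fin 3, val a = val b → a = b := by
    rw [hval]; exact sp_val_inj s hs0
  have hvaldiff : ∀ a b : Fin 3, a ≠ b → 1/(k:ℝ) ≤ (val a - val b)^2 := by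
    rw [hval]; exact sp_val_diff s (1/(k:ℝ)) hssq hs0
  set t : ℕ := ⌊δ * k⌋₊ with hT
  have ht : (t:ℝ) ≤ δ * k := Nat.floor_le (by positivity)
  have htlt : δ * k < (t:ℝ) + 1 := Nat.lt_floor_add_one _
  obtain ⟨M, hMS, hMpack, hMcount⟩ := sp_exists_packing (SPT d k) t
  set vec : (Fin d → Fin 3) → EuclideanSpace ℝ (Fin d) :=
    fun σ => (WithLp.equiv 2 _).symm (fun i => val (σ i)) with hvec
  have happ : ∀ σ i, vec σ i = val (σ i) := fun σ i => rfl
  have hvecinj : Function.Injective vec := by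
    intro σ τ h
    funext i
    exact hvalinj _ _ (by rw [← happ σ i, ← happ τ i, h])
  refine ⟨M.image vec, ?_, ?_, ?_⟩
  · -- membership conditions
    intro v hv
    obtain ⟨σ, hσM, rfl⟩ := Finset.mem_image.1 hv
    have hσT := hMS hσM
    rw [SPT, Finset.mem_filter] at hσT
    constructor
    · intro i
      have := hvalcases (σ i)
      rw [← happ σ i] at this
      exact this
    · have hfeq : (Finset.univ.filter fun i => vec σ i ≠ 0)
          = (Finset.univ.filter fun i => σ i ≠ 0) := by
        apply Finset.filter_congr
        intro i _
        rw [happ]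
        exact hvalne (σ i)
      rw [hfeq]
      exact hσT.2
  · -- cardinality
    have hTge := sp_card_SPT_ge (d := d) (k := k) hkd
    have hkey := sp_key_ineq d k t hk hkd δ hδ0 hδ1 ht
    set B : ℕ := ∑ j ∈ Finset.range (t+1), (2*d).choose j with hBdef
    have hB1 : 1 ≤ B := by
      rw [hBdef]
      calc 1 = (2*d).choose 0 := (Nat.choose_zero_right _).symm
        _ ≤ ∑ j ∈ Finset.range (t+1), (2*d).choose j :=
            Finset.single_le_sum (f := fun j => (2*d).choose j)
              (fun j _ => Nat.zero_le _) (Finset.mem_range.2 (by omega))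
    have hBR : (0:ℝ) < B := by exact_mod_cast hB1
    have hsum : (∑ j ∈ Finset.range (t+1), ((2*d).choose j : ℝ)) = (B:ℝ) := by
      rw [hBdef]; push_cast; ring
    rw [hsum] at hkey
    have hcast1 : ((d.choose k * 2 ^ k : ℕ) : ℝ) ≤ ((SPT d k).card : ℝ) := by
      exact_mod_cast hTge
    have hcast2 : (((SPT d k).card : ℕ) : ℝ) ≤ (M.card : ℝ) * (B:ℝ) := by
      exact_mod_cast hMcount
    have hfin : ((d:ℝ)/k) ^ ((k:ℝ) * (1 - δ)) * (δ / Real.exp 1) ^ (δ * k) * (B:ℝ)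
        ≤ (M.card : ℝ) * (B:ℝ) := by
      push_cast at hcast1
      calc ((d:ℝ)/k) ^ ((k:ℝ) * (1 - δ)) * (δ / Real.exp 1) ^ (δ * k) * (B:ℝ)
          ≤ (d.choose k : ℝ) * 2 ^ k := hkey
        _ ≤ ((SPT d k).card : ℝ) := by push_cast at hcast1 ⊢; linarith
        _ ≤ (M.card : ℝ) * (B:ℝ) := hcast2
    have hMcard := le_of_mul_le_mul_right hfin hBR
    rwa [Finset.card_image_of_injective M hvecinj]
  · -- distances
    intro v hv w hw hvw
    obtain ⟨σ, hσM, rfl⟩ := Finset.mem_image.1 hv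
    obtain ⟨τ, hτM, rfl⟩ := Finset.mem_image.1 hw
    have hστ : σ ≠ τ := fun h => hvw (by rw [h])
    have hΔ := hMpack σ hσM τ hτM hστ
    have hΔR : δ * k < (SPΔ σ τ : ℝ) := by
      have h1 : (t:ℝ) + 1 ≤ (SPΔ σ τ : ℝ) := by exact_mod_cast hΔ
      linarith
    rw [EuclideanSpace.dist_eq]
    apply Real.sqrt_lt_sqrt hδ0.le
    have hterm : ∀ i ∈ (Finset.univ.filter fun i => σ i ≠ τ i),
        1/(k:ℝ) ≤ dist (vec σ i) (vec τ i) ^ 2 := by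
      intro i hi
      rw [happ, happ, Real.dist_eq, sq_abs]
      exact hvaldiff _ _ (Finset.mem_filter.1 hi).2
    calc δ < (SPΔ σ τ : ℝ) / k := (lt_div_iff₀ hkR).2 (by linarith)
      _ = ∑ _i ∈ (Finset.univ.filter fun i => σ i ≠ τ i), 1/(k:ℝ) := by
          rw [Finset.sum_const, nsmul_eq_mul, SPΔ]
          field_simp
      _ ≤ ∑ i ∈ (Finset.univ.filter fun i => σ i ≠ τ i), dist (vec σ i) (vec τ i) ^ 2 :=
          Finset.sum_le_sum hterm
      _ ≤ ∑ i, dist (vec σ i) (vec τ i) ^ 2 :=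
          Finset.sum_le_sum_of_subset_of_nonneg (Finset.filter_subset _ _)
            (fun i _ _ => sq_nonneg _)
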